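/- Let m ≥ 2 be even and define P(x,y) = ∑_{j=0}^{m/2} (-1)^j · C(m, 2j) · x^{m-2j} · y^{2j} and Q(x,y) = (x² + y²)^k for a natural number k ≥ 1. Then for all real x, y: P_x·(Q_y·P_{xy} − Q_x·P_{yy}) + P_y·(Q_x·P_{xy} − Q_y·P_{xx}) = 2·k·m²·(m−1)·(x² + y²)^{k+m−2}, where subscripts denote partial derivatives. -/

import Mathlib

/-- Partial derivative with respect to the first variable. -/
noncomputable def pdx (f : ℝ → ℝ → ℝ) (x y : ℝ) : ℝ := deriv (fun x' => f x' y) x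

/-- Partial derivative with respect to the second variable. -/
noncomputable def pdy (f : ℝ → ℝ → ℝ) (x y : ℝ) : ℝ := deriv (fun y' => f x y') y

open Complex Finset

lemma I_pow_even_re (j : ℕ) : (Complex.I ^ (2 * j)).re = (-1 : ℝ) ^ j := by
  rw [pow_mul, Complex.I_sq]
  have h : ((-1 : ℂ)) ^ j = (((-1 : ℝ) ^ j : ℝ) : ℂ) := by push_cast; ring
  rw [h, Complex.ofReal_re]

lemma I_pow_odd_re (j : ℕ) : (Complex.I ^ (2 * j + 1)).re = 0 := by
  rw [pow_succ, pow_mul, Complex.I_sq]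
  have h : ((-1 : ℂ)) ^ j = (((-1 : ℝ) ^ j : ℝ) : ℂ) := by push_cast; ring
  have him : ((-1 : ℂ) ^ j).im = 0 := by rw [h]; exact Complex.ofReal_im _
  rw [Complex.mul_re, Complex.I_re, Complex.I_im, him]
  ring

lemma re_pow_sum (n : ℕ) (x y : ℝ) :
    ∑ j ∈ Finset.range (n / 2 + 1),
      (-1 : ℝ) ^ j * (n.choose (2 * j)) * x ^ (n - 2 * j) * y ^ (2 * j)
    = (((x : ℂ) + y * Complex.I) ^ n).re := by
  have hexp : ((x : ℂ) + y * Complex.I) ^ n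
      = ∑ i ∈ Finset.range (n + 1),
          ((y : ℂ) * Complex.I) ^ i * (x : ℂ) ^ (n - i) * (n.choose i) := by
    rw [add_comm]
    exact add_pow _ _ _
  rw [hexp, Complex.re_sum]
  have hterm : ∀ i, (((y : ℂ) * Complex.I) ^ i * (x : ℂ) ^ (n - i) * (n.choose i)).re
      = (y ^ i * x ^ (n - i) * (n.choose i)) * (Complex.I ^ i).re := by
    intro i
    have h : ((y : ℂ) * Complex.I) ^ i * (x : ℂ) ^ (n - i) * (n.choose i)
        = ((y ^ i * x ^ (n - i) * (n.choose i) : ℝ) : ℂ) * Complex.I ^ i := by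
      push_cast; ring
    rw [h]
    simp [Complex.mul_re, ← Complex.ofReal_pow]
  simp only [hterm]
  rw [← Finset.sum_filter_of_ne (p := fun i => Even i) (f := fun i =>
      (y ^ i * x ^ (n - i) * (n.choose i)) * (Complex.I ^ i).re) (by
    intro i _ h
    by_contra hodd
    obtain ⟨j, hj⟩ := Nat.not_even_iff_odd.mp hodd
    subst hj
    exact h (by simp [I_pow_odd_re]))]
  have hfilter : (Finset.range (n + 1)).filter (fun i => Even i)
      = (Finset.range (n / 2 + 1)).image (fun j => 2 * j) := by
    ext i
    simp only [Finset.mem_filter, Finset.mem_range, Finset.mem_image]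
    constructor
    · rintro ⟨h1, j, rfl⟩
      exact ⟨j, by omega, by omega⟩
    · rintro ⟨j, hj, rfl⟩
      exact ⟨by omega, ⟨j, by ring⟩⟩
  rw [hfilter, Finset.sum_image (fun a _ b _ h => by omega)]
  refine Finset.sum_congr rfl fun j _ => ?_
  rw [I_pow_even_re]
  ring

lemma hasDerivAt_base_x (a b : ℝ) :
    HasDerivAt (fun x' : ℝ => ((x' : ℂ) + (b : ℂ) * Complex.I)) 1 a := by
  simpa using (Complex.ofRealCLM.hasDerivAt (x := a)).add_const ((b : ℂ) * Complex.I)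

lemma hasDerivAt_base_y (a b : ℝ) :
    HasDerivAt (fun y' : ℝ => ((a : ℂ) + (y' : ℂ) * Complex.I)) Complex.I b := by
  have h := ((Complex.ofRealCLM.hasDerivAt (x := b)).mul_const Complex.I).const_add (a : ℂ)
  simpa using h

lemma hasDerivAt_pow_x (n : ℕ) (a b : ℝ) :
    HasDerivAt (fun x' : ℝ => (((x' : ℂ) + (b : ℂ) * Complex.I) ^ (n + 1)))
      ((n + 1 : ℂ) * ((a : ℂ) + (b : ℂ) * Complex.I) ^ n) a := by
  have h := (hasDerivAt_pow (n + 1) ((a : ℂ) + (b : ℂ) * Complex.I)).scomp_of_eq a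
    (hasDerivAt_base_x a b) (by simp)
  simpa [Function.comp_def] using h

lemma hasDerivAt_pow_y (n : ℕ) (a b : ℝ) :
    HasDerivAt (fun y' : ℝ => (((a : ℂ) + (y' : ℂ) * Complex.I) ^ (n + 1)))
      ((n + 1 : ℂ) * ((a : ℂ) + (b : ℂ) * Complex.I) ^ n * Complex.I) b := by
  have h := (hasDerivAt_pow (n + 1) ((a : ℂ) + (b : ℂ) * Complex.I)).scomp_of_eq b
    (hasDerivAt_base_y a b) (by simp)
  have h2 : HasDerivAt (fun y' : ℝ => (((a : ℂ) + (y' : ℂ) * Complex.I) ^ (n + 1)))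
      (Complex.I • ((↑(n + 1) : ℂ) * ((a : ℂ) + (b : ℂ) * Complex.I) ^ (n + 1 - 1))) b := by
    simpa [Function.comp_def] using h
  convert h2 using 1
  rw [smul_eq_mul, Nat.add_sub_cancel]
  push_cast
  ring

lemma hasDerivAt_re_x (n : ℕ) (a b : ℝ) :
    HasDerivAt (fun x' : ℝ => ((((x' : ℂ) + (b : ℂ) * Complex.I) ^ (n + 1)).re))
      ((n + 1 : ℝ) * (((a : ℂ) + (b : ℂ) * Complex.I) ^ n).re) a := by
  have h := Complex.reCLM.hasFDerivAt.comp_hasDerivAt a (hasDerivAt_pow_x n a b)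
  simpa [Complex.mul_re, Function.comp_def] using h

lemma hasDerivAt_re_y (n : ℕ) (a b : ℝ) :
    HasDerivAt (fun y' : ℝ => ((((a : ℂ) + (y' : ℂ) * Complex.I) ^ (n + 1)).re))
      (-((n + 1 : ℝ) * (((a : ℂ) + (b : ℂ) * Complex.I) ^ n).im)) b := by
  have h := Complex.reCLM.hasFDerivAt.comp_hasDerivAt b (hasDerivAt_pow_y n a b)
  have := h.congr_deriv (show Complex.reCLM ((n + 1 : ℂ) * ((a : ℂ) + (b : ℂ) * Complex.I) ^ n * Complex.I)
    = -((n + 1 : ℝ) * (((a : ℂ) + (b : ℂ) * Complex.I) ^ n).im) by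
      simp [Complex.mul_re, Complex.mul_im])
  simpa [Function.comp_def] using this

lemma hasDerivAt_im_y (n : ℕ) (a b : ℝ) :
    HasDerivAt (fun y' : ℝ => ((((a : ℂ) + (y' : ℂ) * Complex.I) ^ (n + 1)).im))
      ((n + 1 : ℝ) * (((a : ℂ) + (b : ℂ) * Complex.I) ^ n).re) b := by
  have h := Complex.imCLM.hasFDerivAt.comp_hasDerivAt b (hasDerivAt_pow_y n a b)
  have := h.congr_deriv (show Complex.imCLM ((n + 1 : ℂ) * ((a : ℂ) + (b : ℂ) * Complex.I) ^ n * Complex.I)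
    = ((n + 1 : ℝ) * (((a : ℂ) + (b : ℂ) * Complex.I) ^ n).re) by
      simp [Complex.mul_re, Complex.mul_im])
  simpa [Function.comp_def] using this

lemma conj_key (M : ℕ) (x y : ℝ) :
    ((x : ℂ) + y * Complex.I) ^ (M + 1) * (starRingEnd ℂ) (((x : ℂ) + y * Complex.I) ^ M)
      = ((x : ℂ) + y * Complex.I) * ((x ^ 2 + y ^ 2 : ℝ) : ℂ) ^ M := by
  have hc : (starRingEnd ℂ) ((x : ℂ) + y * Complex.I) = (x : ℂ) - y * Complex.I := by
    rw [map_add, map_mul, Complex.conj_ofReal, Complex.conj_ofReal, Complex.conj_I]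
    ring
  have hz : ((x : ℂ) + y * Complex.I) * ((x : ℂ) - y * Complex.I) = ((x ^ 2 + y ^ 2 : ℝ) : ℂ) := by
    push_cast
    linear_combination (-(y : ℂ) ^ 2) * Complex.I_sq
  rw [map_pow, hc, pow_succ', mul_assoc, ← mul_pow, hz]

theorem stmt_10 (m k : ℕ) (hm : 2 ≤ m) (hme : Even m) (hk : 1 ≤ k)
    (P Q : ℝ → ℝ → ℝ)
    (hP : ∀ x y : ℝ, P x y =
      ∑ j ∈ Finset.range (m / 2 + 1),
        (-1 : ℝ) ^ j * (m.choose (2 * j)) * x ^ (m - 2 * j) * y ^ (2 * j))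
    (hQ : ∀ x y : ℝ, Q x y = (x ^ 2 + y ^ 2) ^ k) :
    ∀ x y : ℝ,
      pdx P x y * (pdy Q x y * pdy (pdx P) x y - pdx Q x y * pdy (pdy P) x y) +
        pdy P x y * (pdx Q x y * pdy (pdx P) x y - pdy Q x y * pdx (pdx P) x y) =
      2 * (k : ℝ) * (m : ℝ) ^ 2 * ((m : ℝ) - 1) * (x ^ 2 + y ^ 2) ^ (k + m - 2) := by
  obtain ⟨M, rfl⟩ : ∃ M, m = M + 2 := ⟨m - 2, by omega⟩
  obtain ⟨K, rfl⟩ : ∃ K, k = K + 1 := ⟨k - 1, by omega⟩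
  intro x y
  have hPf : ∀ a b : ℝ, P a b = (((a : ℂ) + b * Complex.I) ^ (M + 2)).re := fun a b => by
    rw [hP, re_pow_sum]
  -- first derivatives of P as functions
  have hPx : pdx P = fun (a b : ℝ) => (((M + 1 : ℕ) + 1 : ℝ)) * (((a : ℂ) + b * Complex.I) ^ (M + 1)).re := by
    funext a b
    unfold pdx
    have he : (fun x' => P x' b) = fun (x' : ℝ) => (((x' : ℂ) + b * Complex.I) ^ (M + 1 + 1)).re := by
      funext x'; rw [hPf]
    rw [he, (hasDerivAt_re_x (M + 1) a b).deriv]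
  have hPy : pdy P = fun (a b : ℝ) => -((((M + 1 : ℕ) + 1 : ℝ)) * (((a : ℂ) + b * Complex.I) ^ (M + 1)).im) := by
    funext a b
    unfold pdy
    have he : (fun y' => P a y') = fun (y' : ℝ) => (((a : ℂ) + y' * Complex.I) ^ (M + 1 + 1)).re := by
      funext y'; rw [hPf]
    rw [he, (hasDerivAt_re_y (M + 1) a b).deriv]
  -- second derivatives at the point
  have hPxx : pdx (pdx P) x y
      = (((M + 1 : ℕ) + 1 : ℝ)) * (((M : ℕ) + 1 : ℝ) * (((x : ℂ) + y * Complex.I) ^ M).re) := by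
    rw [hPx]
    unfold pdx
    exact ((hasDerivAt_re_x M x y).const_mul (((M + 1 : ℕ) + 1 : ℝ))).deriv
  have hPxy : pdy (pdx P) x y
      = (((M + 1 : ℕ) + 1 : ℝ)) * (-(((M : ℕ) + 1 : ℝ) * (((x : ℂ) + y * Complex.I) ^ M).im)) := by
    rw [hPx]
    unfold pdy
    exact ((hasDerivAt_re_y M x y).const_mul (((M + 1 : ℕ) + 1 : ℝ))).deriv
  have hPyy : pdy (pdy P) x y
      = -((((M + 1 : ℕ) + 1 : ℝ)) * (((M : ℕ) + 1 : ℝ) * (((x : ℂ) + y * Complex.I) ^ M).re)) := by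
    rw [hPy]
    unfold pdy
    exact (((hasDerivAt_im_y M x y).const_mul (((M + 1 : ℕ) + 1 : ℝ))).neg).deriv
  -- derivatives of Q
  have hQx : pdx Q x y = (((K : ℕ) + 1 : ℝ)) * (x ^ 2 + y ^ 2) ^ K * (2 * x) := by
    unfold pdx
    have he : (fun x' => Q x' y) = fun x' => (x' ^ 2 + y ^ 2) ^ (K + 1) :=
      funext fun x' => hQ x' y
    rw [he, (((hasDerivAt_pow 2 x).add_const (y ^ 2)).fun_pow (K + 1)).deriv]
    norm_num
  have hQy : pdy Q x y = (((K : ℕ) + 1 : ℝ)) * (x ^ 2 + y ^ 2) ^ K * (2 * y) := by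
    unfold pdy
    have he : (fun y' => Q x y') = fun y' => (x ^ 2 + y' ^ 2) ^ (K + 1) :=
      funext fun y' => hQ x y'
    rw [he, (((hasDerivAt_pow 2 y).const_add (x ^ 2)).fun_pow (K + 1)).deriv]
    norm_num
  -- key algebraic identities
  have hkey := conj_key M x y
  have hre : (((x : ℂ) + y * Complex.I) ^ (M + 1)).re * (((x : ℂ) + y * Complex.I) ^ M).re
      + (((x : ℂ) + y * Complex.I) ^ (M + 1)).im * (((x : ℂ) + y * Complex.I) ^ M).im
      = x * (x ^ 2 + y ^ 2) ^ M := by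
    have h1 := congrArg Complex.re hkey
    simp only [Complex.mul_re, Complex.mul_im, Complex.conj_re, Complex.conj_im,
      Complex.add_re, Complex.add_im, Complex.ofReal_re, Complex.ofReal_im,
      Complex.I_re, Complex.I_im, ← Complex.ofReal_pow] at h1
    linear_combination h1
  have him : (((x : ℂ) + y * Complex.I) ^ (M + 1)).im * (((x : ℂ) + y * Complex.I) ^ M).re
      - (((x : ℂ) + y * Complex.I) ^ (M + 1)).re * (((x : ℂ) + y * Complex.I) ^ M).im
      = y * (x ^ 2 + y ^ 2) ^ M := by
    have h1 := congrArg Complex.im hkey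
    simp only [Complex.mul_re, Complex.mul_im, Complex.conj_re, Complex.conj_im,
      Complex.add_re, Complex.add_im, Complex.ofReal_re, Complex.ofReal_im,
      Complex.I_re, Complex.I_im, ← Complex.ofReal_pow] at h1
    linear_combination h1
  have hPx' : pdx P x y = (((M + 1 : ℕ) + 1 : ℝ)) * (((x : ℂ) + y * Complex.I) ^ (M + 1)).re := by
    rw [hPx]
  have hPy' : pdy P x y = -((((M + 1 : ℕ) + 1 : ℝ)) * (((x : ℂ) + y * Complex.I) ^ (M + 1)).im) := by
    rw [hPy]
  have hexp : K + 1 + (M + 2) - 2 = K + M + 1 := by omega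
  rw [hPx', hPy', hPxx, hPxy, hPyy, hQx, hQy, hexp]
  push_cast
  linear_combination
    (2 * ((K : ℝ) + 1) * ((M : ℝ) + 2) ^ 2 * ((M : ℝ) + 1) * (x ^ 2 + y ^ 2) ^ K * x) * hre
    + (2 * ((K : ℝ) + 1) * ((M : ℝ) + 2) ^ 2 * ((M : ℝ) + 1) * (x ^ 2 + y ^ 2) ^ K * y) * him
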